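/- Under the assumptions on φ above, for every μ satisfying 0 < μ ≤ φ(0) = a·b·r·U'((1-a)·r)·γ, there exists a unique p ≥ 0 with φ(p) = μ; and for μ > φ(0), no p ≥ 0 satisfies φ(p) = μ. Moreover the solution p(μ) is a continuous, strictly decreasing function of μ on (0, φ(0)]. -/

import Mathlib

/-- For every `0 < μ ≤ φ(0)` there is a unique `p ≥ 0` with `φ(p) = μ`; for `μ > φ(0)`
there is none; and any solution map `μ ↦ p(μ)` is continuous and strictly decreasing
on `(0, φ(0)]`. -/
theorem stmt2 (a b r γ : ℝ) (ha : 0 < a) (ha1 : a ≤ 1) (hb : 0 < b) (hr : 0 < r)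
    (hγ : 0 < γ) (U : ℝ → ℝ) (hUdiff : Differentiable ℝ U)
    (hUdiff2 : Differentiable ℝ (deriv U))
    (hU' : ∀ x, 0 < deriv U x) (hU'cont : Continuous (deriv U))
    (hU'' : ∀ x, deriv (deriv U) x ≤ 0)
    (φ : ℝ → ℝ)
    (hφ : ∀ p, φ p = a * b * r * deriv U ((1 - a * Real.exp (-b * p * γ)) * r) * γ *
      Real.exp (-b * p * γ))
    (hφ0 : φ 0 = a * b * r * deriv U ((1 - a) * r) * γ)
    (hlim : Filter.Tendsto φ Filter.atTop (nhds 0)) :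
    (∀ μ, 0 < μ → μ ≤ φ 0 → ∃! p, 0 ≤ p ∧ φ p = μ) ∧
    (∀ μ, φ 0 < μ → ¬ ∃ p, 0 ≤ p ∧ φ p = μ) ∧
    (∀ Pf : ℝ → ℝ, (∀ μ ∈ Set.Ioc 0 (φ 0), 0 ≤ Pf μ ∧ φ (Pf μ) = μ) →
      StrictAntiOn Pf (Set.Ioc 0 (φ 0)) ∧ ContinuousOn Pf (Set.Ioc 0 (φ 0))) := by
  have hU'anti : Antitone (deriv U) := antitone_of_deriv_nonpos hUdiff2 hU''
  -- φ is strictly antitone on ℝ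
  have hanti : StrictAnti φ := by
    intro p q hpq
    rw [hφ p, hφ q]
    have he : Real.exp (-b * q * γ) < Real.exp (-b * p * γ) := by
      apply Real.exp_lt_exp.2
      nlinarith [mul_pos (mul_pos hb hγ) (sub_pos.2 hpq)]
    have harg : (1 - a * Real.exp (-b * p * γ)) * r ≤ (1 - a * Real.exp (-b * q * γ)) * r := by
      have h2 : a * Real.exp (-b * q * γ) ≤ a * Real.exp (-b * p * γ) :=
        mul_le_mul_of_nonneg_left he.le ha.le
      exact mul_le_mul_of_nonneg_right (by linarith) hr.le
    have hUle : deriv U ((1 - a * Real.exp (-b * q * γ)) * r)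
        ≤ deriv U ((1 - a * Real.exp (-b * p * γ)) * r) := hU'anti harg
    have h1 := hU' ((1 - a * Real.exp (-b * p * γ)) * r)
    have h2 := hU' ((1 - a * Real.exp (-b * q * γ)) * r)
    have he1 := Real.exp_pos (-b * q * γ)
    have hK : 0 < a * b * r * γ := by positivity
    calc a * b * r * deriv U ((1 - a * Real.exp (-b * q * γ)) * r) * γ * Real.exp (-b * q * γ)
        = (a * b * r * γ) * (deriv U ((1 - a * Real.exp (-b * q * γ)) * r)
            * Real.exp (-b * q * γ)) := by ring
      _ < (a * b * r * γ) * (deriv U ((1 - a * Real.exp (-b * p * γ)) * r)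
            * Real.exp (-b * p * γ)) :=
          mul_lt_mul_of_pos_left (mul_lt_mul' hUle he he1.le h1) hK
      _ = a * b * r * deriv U ((1 - a * Real.exp (-b * p * γ)) * r) * γ
            * Real.exp (-b * p * γ) := by ring
  -- φ is continuous
  have hφcont : Continuous φ := by
    have : φ = fun p => a * b * r * deriv U ((1 - a * Real.exp (-b * p * γ)) * r) * γ *
        Real.exp (-b * p * γ) := funext hφ
    rw [this]
    have hce : Continuous fun p : ℝ => Real.exp (-b * p * γ) := by
      apply Real.continuous_exp.comp; continuity
    have : Continuous fun p : ℝ => deriv U ((1 - a * Real.exp (-b * p * γ)) * r) := by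
      apply hU'cont.comp; continuity
    continuity
  -- existence and uniqueness
  refine ⟨?_, ?_, ?_⟩
  · intro μ hμ hμ0
    -- find a point where φ < μ
    obtain ⟨N, hN⟩ := (Filter.eventually_atTop).1 (hlim.eventually (gt_mem_nhds hμ))
    set q := max N 0 with hq
    have hq0 : (0 : ℝ) ≤ q := le_max_right _ _
    have hφq : φ q < μ := hN q (le_max_left _ _)
    have hmem : μ ∈ Set.Icc (φ q) (φ 0) := ⟨hφq.le, hμ0⟩
    obtain ⟨p, hp, hpμ⟩ := intermediate_value_Icc' hq0 hφcont.continuousOn hmem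
    refine ⟨p, ⟨hp.1, hpμ⟩, ?_⟩
    rintro y ⟨hy0, hyμ⟩
    exact hanti.injective (by rw [hyμ, hpμ])
  · rintro μ hμ ⟨p, hp0, hpμ⟩
    have : φ p ≤ φ 0 := hanti.antitone hp0
    linarith [hpμ ▸ this]
  · intro Pf hPf
    have hsa : StrictAntiOn Pf (Set.Ioc 0 (φ 0)) := by
      intro μ₁ h₁ μ₂ h₂ h12
      have e₁ := (hPf μ₁ h₁).2
      have e₂ := (hPf μ₂ h₂).2
      have : φ (Pf μ₁) < φ (Pf μ₂) := by rw [e₁, e₂]; exact h12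
      exact (hanti.lt_iff_gt).1 this
    refine ⟨hsa, ?_⟩
    intro μ₀ hμ₀
    rw [Metric.continuousWithinAt_iff]
    intro ε hε
    set p₀ := Pf μ₀ with hp₀def
    have hp₀ : 0 ≤ p₀ := (hPf μ₀ hμ₀).1
    have hφp₀ : φ p₀ = μ₀ := (hPf μ₀ hμ₀).2
    -- δ from the right side (p₀ + ε)
    have hδ₁ : 0 < μ₀ - φ (p₀ + ε) := by
      have : φ (p₀ + ε) < φ p₀ := hanti (by linarith)
      linarith [hφp₀ ▸ this]
    -- δ from the left side
    by_cases hcase : ε ≤ p₀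
    · have hδ₂ : 0 < φ (p₀ - ε) - μ₀ := by
        have : φ p₀ < φ (p₀ - ε) := hanti (by linarith)
        linarith [hφp₀ ▸ this]
      refine ⟨min (μ₀ - φ (p₀ + ε)) (φ (p₀ - ε) - μ₀), lt_min hδ₁ hδ₂, ?_⟩
      intro μ hμ hdist
      rw [Real.dist_eq] at hdist ⊢
      have habs := abs_lt.1 hdist
      have hφμ : φ (Pf μ) = μ := (hPf μ hμ).2
      have hlt : Pf μ < p₀ + ε := by
        by_contra h
        push_neg at h
        have : φ (Pf μ) ≤ φ (p₀ + ε) := hanti.antitone h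
        rw [hφμ] at this
        have := min_le_left (μ₀ - φ (p₀ + ε)) (φ (p₀ - ε) - μ₀)
        linarith [habs.1]
      have hgt : p₀ - ε < Pf μ := by
        by_contra h
        push_neg at h
        have : φ (p₀ - ε) ≤ φ (Pf μ) := hanti.antitone h
        rw [hφμ] at this
        have := min_le_right (μ₀ - φ (p₀ + ε)) (φ (p₀ - ε) - μ₀)
        linarith [habs.2]
      rw [abs_lt]; constructor <;> linarith
    · push_neg at hcase
      refine ⟨μ₀ - φ (p₀ + ε), hδ₁, ?_⟩
      intro μ hμ hdist
      rw [Real.dist_eq] at hdist ⊢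
      have habs := abs_lt.1 hdist
      have hφμ : φ (Pf μ) = μ := (hPf μ hμ).2
      have hPfμ0 : 0 ≤ Pf μ := (hPf μ hμ).1
      have hlt : Pf μ < p₀ + ε := by
        by_contra h
        push_neg at h
        have : φ (Pf μ) ≤ φ (p₀ + ε) := hanti.antitone h
        rw [hφμ] at this
        linarith [habs.1]
      rw [abs_lt]; constructor <;> linarith
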